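/- Let Z be as in the context. Then the function r ↦ 2·(r/(−Z'(r)·P̂(Z(r))))^{1/(m+1)}·Z(r), defined for r ∈ [−1,1] with r ≠ 0, extends to a real analytic function φ on an open interval containing [−1,1]. Moreover φ is an even function with φ(r) > 0 for all r ∈ (−1,1) and φ(1) = 0; φ satisfies (m+1)·r·Z(r)·φ'(r) + (m+1 − 2·Z(r))·φ(r) = 0 for all r ∈ [−1,1]; and φ'(1) = −2. -/

import Mathlib

open Polynomial Set Filter
open scoped Topology

lemma analyticAt_rlog {x : ℝ} (hx : 0 < x) : AnalyticAt ℝ Real.log x := by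
  have h2 : AnalyticAt ℝ (fun t : ℝ => Complex.log (t : ℂ)) x :=
    AnalyticAt.comp ((analyticAt_clog (Complex.ofReal_mem_slitPlane.mpr hx)).restrictScalars)
      (Complex.ofRealCLM.analyticAt x)
  have h1 : AnalyticAt ℝ (fun t : ℝ => (Complex.log (t : ℂ)).re) x :=
    (Complex.reCLM.analyticAt _).comp h2
  exact h1.congr (by filter_upwards with t using (Complex.log_ofReal_re t))

lemma analyticAt_rpow_fun {f : ℝ → ℝ} {x c : ℝ} (hf : AnalyticAt ℝ f x) (hx : 0 < f x) :
    AnalyticAt ℝ (fun t => f t ^ c) x := by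
  have h1 : AnalyticAt ℝ (fun t => Real.exp (Real.log (f t) * c)) x :=
    analyticAt_rexp.comp (((analyticAt_rlog hx).comp hf).mul analyticAt_const)
  apply h1.congr
  have hev : ∀ᶠ t in 𝓝 x, f t ∈ Ioi (0:ℝ) := hf.continuousAt (Ioi_mem_nhds hx)
  filter_upwards [hev] with t ht
  rw [Real.rpow_def_of_pos ht]

set_option maxHeartbeats 1000000 in
theorem stmt_13 (m : ℕ) (hm : 2 ≤ m)
    (lam : Fin (m - 1) → ℝ) (hmono : Monotone lam) (hlt : ∀ i, lam i < 1)
    (P Q Phat Qhat : Polynomial ℝ)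
    (hP : P = ∏ i : Fin (m - 1), (X - C (2 * lam i / ((m : ℝ) + 1))))
    (hQder : ∀ y : ℝ, (derivative Q).eval y = ((m : ℝ) + 1) * y * P.eval y)
    (hQval : Q.eval (2 / ((m : ℝ) + 1)) = 0)
    (hPhat : ∀ x : ℝ, x ≠ 0 → Phat.eval x = x ^ (m - 1) * P.eval (1 / x))
    (hQhat : ∀ x : ℝ, x ≠ 0 → Qhat.eval x = x ^ (m + 1) * Q.eval (1 / x))
    (Z : ℝ → ℝ)
    (hZan : ∃ c d : ℝ, c < -1 ∧ 1 < d ∧ AnalyticOnNhd ℝ Z (Ioo c d))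
    (hODE : ∀ r ∈ Icc (-1 : ℝ) 1,
      r * deriv Z r * Phat.eval (Z r) + Qhat.eval (Z r) = 0)
    (hZ1 : Z 1 = 0)
    (hZeven : ∀ r ∈ Icc (-1 : ℝ) 1, Z (-r) = Z r)
    (hZ0 : Z 0 = ((m : ℝ) + 1) / 2)
    (hZ'0 : deriv Z 0 = 0)
    (hZ' : ∀ r ∈ Ioc (0 : ℝ) 1, deriv Z r < 0)
    (hZ'1 : deriv Z 1 = -1)
    (hZ''0 : deriv (deriv Z) 0 < 0)
    (hZrange : ∀ r ∈ Ioo (-1 : ℝ) 1, r ≠ 0 → Z r ∈ Ioo (0 : ℝ) (((m : ℝ) + 1) / 2)) :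
    ∃ φ : ℝ → ℝ,
      (∃ c d : ℝ, c < -1 ∧ 1 < d ∧ AnalyticOnNhd ℝ φ (Ioo c d)) ∧
      (∀ r ∈ Icc (-1 : ℝ) 1, r ≠ 0 → φ r =
        2 * (r / (-(deriv Z r) * Phat.eval (Z r))) ^ (1 / ((m : ℝ) + 1)) * Z r) ∧
      (∀ r ∈ Icc (-1 : ℝ) 1, φ (-r) = φ r) ∧
      (∀ r ∈ Ioo (-1 : ℝ) 1, 0 < φ r) ∧
      φ 1 = 0 ∧
      (∀ r ∈ Icc (-1 : ℝ) 1,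
        ((m : ℝ) + 1) * r * Z r * deriv φ r + ((m : ℝ) + 1 - 2 * Z r) * φ r = 0) ∧
      deriv φ 1 = -2 := by
  obtain ⟨k, rfl⟩ : ∃ k, m = k + 2 := ⟨m - 2, by omega⟩
  obtain ⟨c₀, d₀, hc₀, hd₀, hZa⟩ := hZan
  have hMpos : (0:ℝ) < ((k+2 : ℕ) : ℝ) + 1 := by positivity
  have hMne : (((k+2 : ℕ) : ℝ) + 1) ≠ 0 := ne_of_gt hMpos
  set M : ℝ := ((k+2 : ℕ) : ℝ) + 1 with hMdef
  set x₀ : ℝ := M / 2 with hx₀def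
  have hx₀pos : 0 < x₀ := by positivity
  have hx₀ne : x₀ ≠ 0 := ne_of_gt hx₀pos
  -- Step A: Phat explicit formula for all x
  have hPhat' : ∀ x : ℝ, Phat.eval x = ∏ i : Fin (k+2-1), (1 - 2 * lam i * x / M) := by
    have key : ∀ x : ℝ, x ≠ 0 → Phat.eval x = ∏ i : Fin (k+2-1), (1 - 2 * lam i * x / M) := by
      intro x hx
      rw [hPhat x hx, hP, eval_prod]
      simp only [eval_sub, eval_X, eval_C]
      have hxp : x ^ (k+2-1) = ∏ _i : Fin (k+2-1), x := by
        simp [Finset.prod_const, Finset.card_univ]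
      rw [hxp, ← Finset.prod_mul_distrib]
      apply Finset.prod_congr rfl
      intro i _
      field_simp
    have hcont1 : Continuous (fun x : ℝ => Phat.eval x) := Phat.continuous
    have hcont2 : Continuous (fun x : ℝ => ∏ i : Fin (k+2-1), (1 - 2 * lam i * x / M)) := by
      apply continuous_finset_prod
      intro i _
      fun_prop
    have := Continuous.ext_on (dense_compl_singleton (0:ℝ)) hcont1 hcont2
      (fun y hy => key y (by simpa using hy))
    exact fun x => congrFun this x
  -- Step B: positivity of Phat on [0, x₀]
  have hPpos : ∀ x ∈ Icc (0:ℝ) x₀, 0 < Phat.eval x := by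
    intro x hx
    rw [hPhat']
    apply Finset.prod_pos
    intro i _
    rw [sub_pos, div_lt_one hMpos]
    rcases le_or_gt (lam i) 0 with hl | hl
    · nlinarith [hx.1]
    · have hxle : x ≤ M / 2 := hx.2
      nlinarith [hlt i, hx.1]
  -- Step C: range of Z on [-1,1]
  have hZm1 : Z (-1) = 0 := by
    have := hZeven 1 (by norm_num); rwa [hZ1] at this
  have hZb : ∀ r ∈ Icc (-1:ℝ) 1, Z r ∈ Icc (0:ℝ) x₀ := by
    intro r hr
    rcases eq_or_ne r 1 with rfl | h1
    · rw [hZ1]; exact ⟨le_refl _, hx₀pos.le⟩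
    rcases eq_or_ne r (-1) with rfl | h2
    · rw [hZm1]; exact ⟨le_refl _, hx₀pos.le⟩
    rcases eq_or_ne r 0 with rfl | h3
    · rw [hZ0]; exact ⟨by positivity, le_refl _⟩
    · have hr' : r ∈ Ioo (-1:ℝ) 1 :=
        ⟨lt_of_le_of_ne hr.1 (Ne.symm h2), lt_of_le_of_ne hr.2 h1⟩
      have := hZrange r hr' h3
      exact ⟨this.1.le, this.2.le⟩
  -- Step D: f = Qhat ∘ Z analytic
  set f : ℝ → ℝ := fun r => Qhat.eval (Z r) with hfdef
  have hfa : ∀ r ∈ Ioo c₀ d₀, AnalyticAt ℝ f r := by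
    intro r hr
    have h1 : AnalyticAt ℝ (fun y : ℝ => Qhat.eval y) (Z r) := by
      have := (analyticAt_id (𝕜 := ℝ) (z := Z r)).aeval_polynomial Qhat
      simpa using this
    exact h1.comp (hZa r hr)
  have hIcc : Icc (-1:ℝ) 1 ⊆ Ioo c₀ d₀ := fun r hr => ⟨lt_of_lt_of_le hc₀ hr.1, lt_of_le_of_lt hr.2 hd₀⟩
  -- f in terms of ODE
  have hfODE : ∀ r ∈ Icc (-1:ℝ) 1, f r = -(r * deriv Z r * Phat.eval (Z r)) := by
    intro r hr; have := hODE r hr; linarith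
  have hfeven : ∀ r ∈ Icc (-1:ℝ) 1, f (-r) = f r := by
    intro r hr; simp only [hfdef]; rw [hZeven r hr]
  have hfpos : ∀ r ∈ Ioc (0:ℝ) 1, 0 < f r := by
    intro r hr
    have hr' : r ∈ Icc (-1:ℝ) 1 := ⟨by linarith [hr.1], hr.2⟩
    rw [hfODE r hr']
    have h1 : deriv Z r < 0 := hZ' r hr
    have h2 : 0 < Phat.eval (Z r) := hPpos _ (hZb r hr')
    have : r * deriv Z r * Phat.eval (Z r) < 0 := by
      apply mul_neg_of_neg_of_pos _ h2
      exact mul_neg_of_pos_of_neg hr.1 h1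
    linarith
  -- Step F: derivative facts for f
  have hZd : ∀ r ∈ Ioo c₀ d₀, HasDerivAt Z (deriv Z r) r := by
    intro r hr; exact ((hZa r hr).differentiableAt).hasDerivAt
  have hfd : ∀ r ∈ Ioo c₀ d₀,
      HasDerivAt f ((derivative Qhat).eval (Z r) * deriv Z r) r := by
    intro r hr
    exact (Qhat.hasDerivAt (Z r)).comp r (hZd r hr)
  have h0mem : (0:ℝ) ∈ Ioo c₀ d₀ := hIcc ⟨by norm_num, by norm_num⟩
  have h1mem : (1:ℝ) ∈ Ioo c₀ d₀ := hIcc ⟨by norm_num, le_refl 1⟩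
  have hQhatx₀ : Qhat.eval x₀ = 0 := by
    rw [hQhat x₀ hx₀ne]
    have : 1 / x₀ = 2 / M := by rw [hx₀def]; field_simp
    rw [this, hQval]; ring
  have hf0 : f 0 = 0 := by rw [hfdef]; simp only [hZ0]; exact hQhatx₀
  have hf'0 : deriv f 0 = 0 := by
    rw [(hfd 0 h0mem).deriv, hZ'0]; ring
  -- Step G: key polynomial identity and sign of Qhat' at x₀
  have hKey : ∀ x : ℝ, x * (derivative Qhat).eval x = M * (Qhat.eval x - Phat.eval x) := by
    have key : ∀ x : ℝ, x ≠ 0 →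
        x * (derivative Qhat).eval x = M * (Qhat.eval x - Phat.eval x) := by
      intro x hx
      have h1 : HasDerivAt (fun t : ℝ => t ^ (k+2+1)) ((↑(k+2+1) : ℝ) * x ^ (k+2)) x := by
        simpa using hasDerivAt_pow (k+2+1) x
      have h3 : HasDerivAt (fun t : ℝ => t⁻¹) (-(x^2)⁻¹) x := hasDerivAt_inv hx
      have h2 : HasDerivAt (fun t : ℝ => Q.eval (1/t))
          ((derivative Q).eval (1/x) * (-(x^2)⁻¹)) x := by
        have := (Q.hasDerivAt (x⁻¹)).comp x h3
        simpa [one_div, Function.comp_def] using this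
      have hD := h1.mul h2
      have hEq : (fun t : ℝ => Qhat.eval t) =ᶠ[𝓝 x] (fun t => t ^ (k+2+1) * Q.eval (1/t)) := by
        filter_upwards [eventually_ne_nhds hx] with t ht using hQhat t ht
      have hD' : HasDerivAt (fun t : ℝ => Qhat.eval t)
          ((↑(k+2+1) : ℝ) * x ^ (k+2) * Q.eval (1/x) +
            x^(k+2+1) * ((derivative Q).eval (1/x) * (-(x^2)⁻¹))) x :=
        hD.congr_of_eventuallyEq hEq
      have hQD : (derivative Qhat).eval x =
          (↑(k+2+1) : ℝ) * x ^ (k+2) * Q.eval (1/x) +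
            x^(k+2+1) * ((derivative Q).eval (1/x) * (-(x^2)⁻¹)) := by
        rw [← Polynomial.deriv, hD'.deriv]
      rw [hQD, hQhat x hx, hPhat x hx, hQder (1/x)]
      have e1 : k + 2 + 1 = (k + 2 - 1) + 2 := by omega
      rw [e1]
      rw [hMdef]
      push_cast
      field_simp
      ring
    have hcont1 : Continuous (fun x : ℝ => x * (derivative Qhat).eval x) := by fun_prop
    have hcont2 : Continuous (fun x : ℝ => M * (Qhat.eval x - Phat.eval x)) := by fun_prop
    have := Continuous.ext_on (dense_compl_singleton (0:ℝ)) hcont1 hcont2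
      (fun y hy => key y (by simpa using hy))
    exact fun x => congrFun this x
  have hQ'x₀ : (derivative Qhat).eval x₀ < 0 := by
    have h := hKey x₀
    rw [hQhatx₀] at h
    have hP₀ : 0 < Phat.eval x₀ := hPpos x₀ ⟨le_of_lt hx₀pos, le_refl _⟩
    nlinarith
  have hdZa : AnalyticOnNhd ℝ (deriv Z) (Ioo c₀ d₀) := hZa.deriv
  have hf''0 : 0 < deriv (deriv f) 0 := by
    have hF' : deriv f =ᶠ[𝓝 0]
        (fun r => (derivative Qhat).eval (Z r) * deriv Z r) := by
      filter_upwards [isOpen_Ioo.mem_nhds h0mem] with r hr using (hfd r hr).deriv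
    have hD1 : HasDerivAt (fun r => (derivative Qhat).eval (Z r))
        ((derivative (derivative Qhat)).eval (Z 0) * deriv Z 0) 0 :=
      ((derivative Qhat).hasDerivAt (Z 0)).comp 0 (hZd 0 h0mem)
    have hD2 : HasDerivAt (deriv Z) (deriv (deriv Z) 0) 0 :=
      ((hdZa 0 h0mem).differentiableAt).hasDerivAt
    have hD3 := hD1.mul hD2
    have : deriv (deriv f) 0 =
        (derivative (derivative Qhat)).eval (Z 0) * deriv Z 0 * deriv Z 0
          + (derivative Qhat).eval (Z 0) * deriv (deriv Z) 0 := by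
      rw [Filter.EventuallyEq.deriv_eq hF']
      exact hD3.deriv
    rw [this, hZ'0, hZ0]
    have : (0:ℝ) < (derivative Qhat).eval x₀ * deriv (deriv Z) 0 :=
      mul_pos_of_neg_of_neg hQ'x₀ hZ''0
    nlinarith
  -- Step I: order-2 factorization of f at 0
  obtain ⟨g, hg, hg0, hfg⟩ :
      ∃ g : ℝ → ℝ, AnalyticAt ℝ g 0 ∧ 0 < g 0 ∧ ∀ᶠ z in 𝓝 0, f z = z ^ 2 * g z := by
    have hnot : ¬ (∀ᶠ z in 𝓝 (0:ℝ), f z = 0) := by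
      intro hev
      have h2 : ∀ᶠ z in 𝓝[>] (0:ℝ), f z = 0 := hev.filter_mono nhdsWithin_le_nhds
      have h3 : ∀ᶠ z in 𝓝[>] (0:ℝ), z ∈ Ioc (0:ℝ) 1 :=
        Ioc_mem_nhdsGT_of_mem ⟨le_refl (0:ℝ), zero_lt_one⟩
      obtain ⟨z, h4, h5⟩ := (h2.and h3).exists
      exact absurd h4 (ne_of_gt (hfpos z h5))
    obtain ⟨n, g, hg, hgne, hfg0⟩ :=
      (hfa 0 h0mem).exists_eventuallyEq_pow_smul_nonzero_iff.mpr hnot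
    have hfg0' : ∀ᶠ z in 𝓝 (0:ℝ), f z = z ^ n * g z := by
      filter_upwards [hfg0] with z hz; simpa [smul_eq_mul] using hz
    have hgd : HasDerivAt g (deriv g 0) 0 := hg.differentiableAt.hasDerivAt
    have hn0 : n ≠ 0 := by
      rintro rfl
      have h5 := hfg0'.self_of_nhds
      rw [hf0] at h5
      simp at h5
      exact hgne h5.symm
    have hderiv_eq : deriv f 0 = (n:ℝ) * 0^(n-1) * g 0 + 0^n * deriv g 0 := by
      rw [Filter.EventuallyEq.deriv_eq hfg0']
      exact ((hasDerivAt_pow n 0).mul hgd).deriv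
    have hn1 : n ≠ 1 := by
      rintro rfl
      rw [hf'0] at hderiv_eq
      simp at hderiv_eq
      exact hgne hderiv_eq.symm
    have hgderiv : AnalyticAt ℝ (deriv g) 0 := by
      have h6 : AnalyticOnNhd ℝ g {x | AnalyticAt ℝ g x} := fun x hx => hx
      exact h6.deriv 0 hg
    have hn2 : n = 2 := by
      by_contra hne2
      have h3n : 3 ≤ n := by omega
      have hgan : ∀ᶠ z in 𝓝 (0:ℝ), AnalyticAt ℝ g z := hg.eventually_analyticAt
      have hDF : deriv f =ᶠ[𝓝 0]
          (fun z => (n:ℝ) * z^(n-1) * g z + z^n * deriv g z) := by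
        filter_upwards [hfg0'.eventually_nhds, hgan] with z hz hgz
        have h1 : deriv f z = deriv (fun w => w^n * g w) z :=
          Filter.EventuallyEq.deriv_eq hz
        rw [h1]
        exact ((hasDerivAt_pow n z).mul hgz.differentiableAt.hasDerivAt).deriv
      have ha : HasDerivAt (fun z : ℝ => (n:ℝ) * (z^(n-1) * g z)) 0 0 := by
        have h7 := ((hasDerivAt_pow (n-1) 0).mul hgd).const_mul (n:ℝ)
        refine h7.congr_deriv ?_
        rw [zero_pow (by omega : n-1-1 ≠ 0), zero_pow (by omega : n-1 ≠ 0)]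
        ring
      have hb : HasDerivAt (fun z : ℝ => z^n * deriv g z) 0 0 := by
        have h8 := (hasDerivAt_pow n 0).mul hgderiv.differentiableAt.hasDerivAt
        refine h8.congr_deriv ?_
        rw [zero_pow (by omega : n-1 ≠ 0), zero_pow (by omega : n ≠ 0)]
        ring
      have hD2' : HasDerivAt
          (fun z : ℝ => (n:ℝ) * z^(n-1) * g z + z^n * deriv g z) 0 0 := by
        have := ha.add hb
        rw [add_zero] at this
        refine this.congr_of_eventuallyEq (Filter.Eventually.of_forall fun z => ?_)
        simp [mul_assoc]
      have hzero : deriv (deriv f) 0 = 0 := by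
        rw [Filter.EventuallyEq.deriv_eq hDF]
        exact hD2'.deriv
      rw [hzero] at hf''0
      exact lt_irrefl 0 hf''0
    subst hn2
    have hg0pos : 0 < g 0 := by
      have hge : ∀ᶠ z in 𝓝[>] (0:ℝ), 0 ≤ g z := by
        filter_upwards [hfg0'.filter_mono nhdsWithin_le_nhds,
          (Ioc_mem_nhdsGT_of_mem ⟨le_refl (0:ℝ), zero_lt_one⟩ :
            Ioc (0:ℝ) 1 ∈ 𝓝[>] (0:ℝ)), self_mem_nhdsWithin] with z h1 h2 h3
        have hfz : 0 < f z := hfpos z h2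
        have hz2 : (0:ℝ) < z^2 := by
          have : (0:ℝ) < z := h3
          positivity
        nlinarith
      have h9 : 0 ≤ g 0 :=
        ge_of_tendsto (hg.continuousAt.tendsto.mono_left (nhdsWithin_le_nhds (s := Ioi (0:ℝ)))) hge
      exact lt_of_le_of_ne h9 (Ne.symm hgne)
    exact ⟨g, hg, hg0pos, hfg0'⟩
  -- Step J: definition and properties of h
  set h : ℝ → ℝ := fun r => if r = 0 then g 0 else f r / r^2 with hhdef
  have hh0 : h 0 = g 0 := by rw [hhdef]; simp
  have hhval : ∀ r : ℝ, r ≠ 0 → h r = f r / r^2 := by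
    intro r hr; rw [hhdef]; simp [hr]
  have hhan : ∀ r ∈ Ioo c₀ d₀, AnalyticAt ℝ h r := by
    intro r hr
    rcases eq_or_ne r 0 with rfl | hrne
    · apply hg.congr
      filter_upwards [hfg] with z hz
      rcases eq_or_ne z 0 with rfl | hz0
      · rw [hh0]
      · rw [hhval z hz0, hz]
        field_simp
    · have h1 : AnalyticAt ℝ (fun t => f t / t^2) r :=
        (hfa r hr).div (analyticAt_id.pow 2) (pow_ne_zero 2 hrne)
      apply h1.congr
      filter_upwards [eventually_ne_nhds hrne] with t ht
      rw [hhval t ht]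
  have hheven : ∀ r ∈ Icc (-1:ℝ) 1, h (-r) = h r := by
    intro r hr
    rcases eq_or_ne r 0 with rfl | hrne
    · norm_num
    · rw [hhval _ (neg_ne_zero.mpr hrne), hhval r hrne, hfeven r hr, neg_pow]
      norm_num
  have hh1 : h 1 = 1 := by
    rw [hhval 1 one_ne_zero, hfODE 1 (by norm_num : (1:ℝ) ∈ Icc (-1:ℝ) 1), hZ'1, hZ1,
      hPhat' 0]
    simp
  have hhpos : ∀ r ∈ Icc (-1:ℝ) 1, 0 < h r := by
    intro r hr
    rcases eq_or_ne r 0 with rfl | hrne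
    · rw [hh0]; exact hg0
    rcases lt_or_gt_of_ne hrne with hneg | hpos
    · have h1 : -r ∈ Ioc (0:ℝ) 1 := ⟨by linarith, by linarith [hr.1]⟩
      have h2 := hfpos (-r) h1
      rw [hhval r hrne]
      rw [hfeven r hr] at h2
      exact div_pos h2 (by positivity)
    · rw [hhval r hrne]
      exact div_pos (hfpos r ⟨hpos, hr.2⟩) (by positivity)
  -- Step K: choice of final interval where h > 0
  obtain ⟨c, d, hc, hd, hcd₀, hhpos' : ∀ r ∈ Ioo c d, 0 < h r⟩ :
      ∃ c d : ℝ, c < -1 ∧ 1 < d ∧ Ioo c d ⊆ Ioo c₀ d₀ ∧ ∀ r ∈ Ioo c d, 0 < h r := by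
    have hm1mem : (-1:ℝ) ∈ Ioo c₀ d₀ := hIcc ⟨le_refl _, by norm_num⟩
    have he1 : ∀ᶠ t in 𝓝 (1:ℝ), 0 < h t :=
      (hhan 1 h1mem).continuousAt (Ioi_mem_nhds (by rw [hh1]; norm_num))
    have hem1 : ∀ᶠ t in 𝓝 (-1:ℝ), 0 < h t :=
      (hhan (-1) hm1mem).continuousAt
        (Ioi_mem_nhds (hhpos (-1) ⟨le_refl _, by norm_num⟩))
    obtain ⟨ε₁, hε₁, hb1⟩ := Metric.eventually_nhds_iff.mp he1
    obtain ⟨ε₂, hε₂, hb2⟩ := Metric.eventually_nhds_iff.mp hem1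
    set ε : ℝ := min (min ε₁ ε₂) (min (d₀ - 1) (-1 - c₀)) with hεdef
    have hεpos : 0 < ε := by
      apply lt_min (lt_min hε₁ hε₂) (lt_min (by linarith) (by linarith))
    have hεa : ε ≤ ε₁ := le_trans (min_le_left _ _) (min_le_left _ _)
    have hεb : ε ≤ ε₂ := le_trans (min_le_left _ _) (min_le_right _ _)
    have hεc : ε ≤ d₀ - 1 := le_trans (min_le_right _ _) (min_le_left _ _)
    have hεd : ε ≤ -1 - c₀ := le_trans (min_le_right _ _) (min_le_right _ _)
    refine ⟨-1 - ε/2, 1 + ε/2, by linarith, by linarith, ?_, ?_⟩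
    · intro t ht
      exact ⟨by linarith [ht.1], by linarith [ht.2]⟩
    · intro t ht
      rcases le_or_gt t 1 with ht1 | ht1
      · rcases le_or_gt (-1:ℝ) t with ht2 | ht2
        · exact hhpos t ⟨ht2, ht1⟩
        · apply hb2
          rw [Real.dist_eq, abs_of_nonpos (by linarith)]
          linarith [ht.1]
      · apply hb1
        rw [Real.dist_eq, abs_of_pos (by linarith)]
        linarith [ht.2]
  -- Step L: define φ and prove all properties
  set c' : ℝ := 1 / M with hc'def
  set φ : ℝ → ℝ := fun r => 2 * (h r)⁻¹ ^ c' * Z r with hφdef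
  have hφan : AnalyticOnNhd ℝ φ (Ioo c d) := by
    intro r hr
    have h1 : AnalyticAt ℝ (fun t => (h t)⁻¹ ^ c') r :=
      analyticAt_rpow_fun ((hhan r (hcd₀ hr)).inv (ne_of_gt (hhpos' r hr)))
        (inv_pos.mpr (hhpos' r hr))
    exact ((analyticAt_const.mul h1).mul (hZa r (hcd₀ hr)))
  have hinv : ∀ r ∈ Icc (-1:ℝ) 1, r ≠ 0 →
      (h r)⁻¹ = r / (-(deriv Z r) * Phat.eval (Z r)) := by
    intro r hr hrne
    rw [hhval r hrne, hfODE r hr]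
    by_cases hab : -(deriv Z r) * Phat.eval (Z r) = 0
    · rw [hab, div_zero]
      have h1 : deriv Z r * Phat.eval (Z r) = 0 := by
        rw [neg_mul] at hab
        exact neg_eq_zero.mp hab
      have h2 : r * deriv Z r * Phat.eval (Z r) = 0 := by
        rw [mul_assoc, h1, mul_zero]
      rw [h2]
      simp
    · rw [inv_div]
      rw [show -(r * deriv Z r * Phat.eval (Z r))
          = r * (-(deriv Z r) * Phat.eval (Z r)) by ring, pow_two,
        mul_div_mul_left _ _ hrne]
  have hφformula : ∀ r ∈ Icc (-1:ℝ) 1, r ≠ 0 → φ r =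
      2 * (r / (-(deriv Z r) * Phat.eval (Z r))) ^ (1 / (((k+2 : ℕ) : ℝ) + 1)) * Z r := by
    intro r hr hrne
    rw [hφdef]
    simp only
    rw [hinv r hr hrne]
  have hφeven : ∀ r ∈ Icc (-1:ℝ) 1, φ (-r) = φ r := by
    intro r hr
    simp only [hφdef]
    rw [hheven r hr, hZeven r hr]
  have hφpos : ∀ r ∈ Ioo (-1:ℝ) 1, 0 < φ r := by
    intro r hr
    have hZpos : 0 < Z r := by
      rcases eq_or_ne r 0 with rfl | hrne
      · rw [hZ0]; positivity
      · exact (hZrange r hr hrne).1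
    have : 0 < (h r)⁻¹ ^ c' := Real.rpow_pos_of_pos
      (inv_pos.mpr (hhpos r (Ioo_subset_Icc_self hr))) _
    positivity
  have hφ1 : φ 1 = 0 := by rw [hφdef]; simp [hZ1]
  -- derivative of φ
  have hφderiv : ∀ r ∈ Ioo c d, r ≠ 0 →
      deriv φ r = 2 * ((-(((derivative Qhat).eval (Z r) * deriv Z r * r^2 - f r * (2*r)) / (r^2)^2) / (h r)^2) * c' * (h r)⁻¹ ^ (c' - 1)) * Z r
        + 2 * (h r)⁻¹ ^ c' * deriv Z r := by
    intro r hr hrne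
    have hrmem := hcd₀ hr
    have hne : h r ≠ 0 := ne_of_gt (hhpos' r hr)
    have hval : h =ᶠ[𝓝 r] (fun t => f t / t^2) := by
      filter_upwards [eventually_ne_nhds hrne] with t ht using hhval t ht
    have hdiv : HasDerivAt (fun t => f t / t^2)
        (((derivative Qhat).eval (Z r) * deriv Z r * r^2 - f r * (2*r)) / (r^2)^2) r := by
      have h2 : HasDerivAt (fun t : ℝ => t^2) (2*r) r := by
        simpa using hasDerivAt_pow 2 r
      exact (hfd r hrmem).div h2 (pow_ne_zero 2 hrne)
    have hhd : HasDerivAt h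
        (((derivative Qhat).eval (Z r) * deriv Z r * r^2 - f r * (2*r)) / (r^2)^2) r :=
      hdiv.congr_of_eventuallyEq hval
    have hinvd : HasDerivAt (fun t => (h t)⁻¹)
        (-(((derivative Qhat).eval (Z r) * deriv Z r * r^2 - f r * (2*r)) / (r^2)^2) / (h r)^2) r :=
      hhd.inv hne
    have hrpowd : HasDerivAt (fun t => (h t)⁻¹ ^ c')
        ((-(((derivative Qhat).eval (Z r) * deriv Z r * r^2 - f r * (2*r)) / (r^2)^2) / (h r)^2)
          * c' * ((h r)⁻¹) ^ (c' - 1)) r :=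
      hinvd.rpow_const (Or.inl (inv_ne_zero hne))
    have hφd := (hrpowd.const_mul 2).mul (hZd r hrmem)
    have : deriv φ r = deriv (fun t => 2 * (h t)⁻¹ ^ c' * Z t) r := rfl
    rw [this]
    rw [show (fun t => 2 * (h t)⁻¹ ^ c' * Z t) = (fun t => (2 * (h t)⁻¹ ^ c') * Z t) by
      funext t; ring]
    exact hφd.deriv
  have hφODE : ∀ r ∈ Icc (-1:ℝ) 1,
      M * r * Z r * deriv φ r + (M - 2 * Z r) * φ r = 0 := by
    intro r hr
    rcases eq_or_ne r 0 with rfl | hrne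
    · rw [hZ0]
      have hzz : M - 2 * x₀ = 0 := by rw [hx₀def]; ring
      rw [hzz]
      ring
    rcases eq_or_ne (Z r) 0 with hZr0 | hZrne
    · have hφr : φ r = 0 := by simp only [hφdef]; rw [hZr0]; ring
      rw [hZr0, hφr]
      ring
    have hrIoo : r ∈ Ioo (-1:ℝ) 1 := by
      constructor
      · rcases eq_or_lt_of_le hr.1 with he | hlt
        · exfalso; apply hZrne; rw [← he]; exact hZm1
        · exact hlt
      · rcases eq_or_lt_of_le hr.2 with he | hlt
        · exfalso; apply hZrne; rw [he]; exact hZ1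
        · exact hlt
    have hrcd : r ∈ Ioo c d := ⟨by linarith [hrIoo.1], by linarith [hrIoo.2]⟩
    have hhr : 0 < h r := hhpos' r hrcd
    have hne : h r ≠ 0 := ne_of_gt hhr
    have hFpos : 0 < f r := by
      have h2 := hhr
      rw [hhval r hrne] at h2
      have hr2 : (0:ℝ) < r^2 := by positivity
      calc (0:ℝ) < (f r / r^2) * r^2 := by positivity
        _ = f r := by field_simp
    have hFne : f r ≠ 0 := ne_of_gt hFpos
    have hApos : 0 < (h r)⁻¹ := inv_pos.mpr hhr
    have hODEr : f r = -(r * deriv Z r * Phat.eval (Z r)) := hfODE r hr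
    have hkey : Z r * (derivative Qhat).eval (Z r) = M * (f r - Phat.eval (Z r)) :=
      hKey (Z r)
    rw [hφderiv r hrcd hrne]
    simp only [hφdef]
    rw [Real.rpow_sub_one (ne_of_gt hApos)]
    rw [hhval r hrne]
    set B := ((f r / r^2)⁻¹) ^ c' with hBdef
    set a := Z r
    set a' := deriv Z r
    set p := Phat.eval (Z r)
    set q' := (derivative Qhat).eval (Z r)
    set F := f r
    have hane : a ≠ 0 := hZrne
    have hprodne : r * a' * p ≠ 0 := by
      intro h0
      rw [h0] at hODEr
      rw [hODEr] at hFpos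
      norm_num at hFpos
    have ha'ne : a' ≠ 0 := fun h0 => hprodne (by rw [h0]; ring)
    have hpne : p ≠ 0 := fun h0 => hprodne (by rw [h0]; ring)
    have hq' : q' = M * (F - p) / a := by
      rw [eq_div_iff hane]
      linear_combination hkey
    rw [hc'def, hq', hODEr]
    field_simp
    ring
  have hφ'1 : deriv φ 1 = -2 := by
    have h1cd : (1:ℝ) ∈ Ioo c d := ⟨by linarith, hd⟩
    rw [hφderiv 1 h1cd one_ne_zero, hZ1, hZ'1, hh1]
    norm_num [Real.one_rpow]
  exact ⟨φ, ⟨c, d, hc, hd, hφan⟩, hφformula, hφeven, hφpos, hφ1, hφODE, hφ'1⟩
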